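/- For g = 3: given an Aronhold system q₁,…,q₇ of odd quadratic forms, the 35 forms q_{ijk} := q_i + q_j + q_k for distinct i, j, k, together with q_S := q₁ + ⋯ + q₇, are precisely the 36 even quadratic forms, and the q_{ijk} are pairwise distinct and distinct from q_S. -/

import Mathlib

/-- `q` is a quadratic form refining the symplectic form `ω`. -/
def IsQuadraticRefinement {V : Type*} [AddCommGroup V] [Module (ZMod 2) V]
    (ω : V →ₗ[ZMod 2] V →ₗ[ZMod 2] ZMod 2) (q : V → ZMod 2) : Prop :=
  ∀ v w, q (v + w) = q v + q w + ω v w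

/-- A basis indexed by `Fin g ⊕ Fin g` is symplectic for `ω`. -/
def IsSymplecticBasis {V : Type*} [AddCommGroup V] [Module (ZMod 2) V] {g : ℕ}
    (ω : V →ₗ[ZMod 2] V →ₗ[ZMod 2] ZMod 2)
    (b : Module.Basis (Fin g ⊕ Fin g) (ZMod 2) V) : Prop :=
  (∀ i j, ω (b (Sum.inl i)) (b (Sum.inr j)) = if i = j then 1 else 0) ∧
  (∀ i j, ω (b (Sum.inl i)) (b (Sum.inl j)) = 0) ∧
  (∀ i j, ω (b (Sum.inr i)) (b (Sum.inr j)) = 0)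

/-- The Arf invariant of `q` with respect to the symplectic basis `b`. -/
noncomputable def arfInvariant {V : Type*} [AddCommGroup V] [Module (ZMod 2) V] {g : ℕ}
    (b : Module.Basis (Fin g ⊕ Fin g) (ZMod 2) V) (q : V → ZMod 2) : ZMod 2 :=
  ∑ i : Fin g, q (b (Sum.inl i)) * q (b (Sum.inr i))

/-- An Aronhold system for `g = 3`: seven pairwise distinct odd quadratic forms
refining `ω`, every three of which are azygetic (i.e. the pointwise sum of any
three of them is an even quadratic form). -/
noncomputable def IsAronholdSystem {V : Type*} [AddCommGroup V] [Module (ZMod 2) V]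
    (ω : V →ₗ[ZMod 2] V →ₗ[ZMod 2] ZMod 2)
    (b : Module.Basis (Fin 3 ⊕ Fin 3) (ZMod 2) V)
    (q : Fin 7 → V → ZMod 2) : Prop :=
  Function.Injective q ∧
  (∀ k, IsQuadraticRefinement ω (q k) ∧ arfInvariant b (q k) = 1) ∧
  (∀ i j k : Fin 7, i ≠ j → i ≠ k → j ≠ k →
    arfInvariant b (fun v => q i v + q j v + q k v) = 0)

/-! ### Auxiliary machinery -/

/-- The bilinear pairing on functions induced by values at the symplectic basis. -/
noncomputable def Bp {V : Type*} [AddCommGroup V] [Module (ZMod 2) V] {g : ℕ}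
    (b : Module.Basis (Fin g ⊕ Fin g) (ZMod 2) V) (r s : V → ZMod 2) : ZMod 2 :=
  ∑ i : Fin g, (r (b (Sum.inl i)) * s (b (Sum.inr i)) + r (b (Sum.inr i)) * s (b (Sum.inl i)))

section Aux
variable {V : Type*} [AddCommGroup V] [Module (ZMod 2) V] {g : ℕ}
  (b : Module.Basis (Fin g ⊕ Fin g) (ZMod 2) V)

lemma z2 : ∀ x : ZMod 2, x + x = 0 := by decide

lemma arf_add (r s : V → ZMod 2) :
    arfInvariant b (fun v => r v + s v)
      = arfInvariant b r + arfInvariant b s + Bp b r s := by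
  simp only [arfInvariant, Bp, ← Finset.sum_add_distrib]
  exact Finset.sum_congr rfl (fun i _ => by ring)

lemma arf_congr {r s : V → ZMod 2} (h : ∀ v, r v = s v) :
    arfInvariant b r = arfInvariant b s := by
  simp only [arfInvariant, h]

lemma Bp_congr_left {r r' : V → ZMod 2} (s : V → ZMod 2) (h : ∀ v, r v = r' v) :
    Bp b r s = Bp b r' s := by
  simp only [Bp, h]

lemma Bp_add_left (r r' s : V → ZMod 2) :
    Bp b (fun v => r v + r' v) s = Bp b r s + Bp b r' s := by
  simp only [Bp, ← Finset.sum_add_distrib]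
  exact Finset.sum_congr rfl (fun i _ => by ring)

lemma Bp_smul_left (c : ZMod 2) (r s : V → ZMod 2) :
    Bp b (fun v => c * r v) s = c * Bp b r s := by
  simp only [Bp, Finset.mul_sum]
  exact Finset.sum_congr rfl (fun i _ => by ring)

lemma Bp_self (r : V → ZMod 2) : Bp b r r = 0 := by
  have h : ∀ x y : ZMod 2, x * y + y * x = 0 := by decide
  simp only [Bp, h, Finset.sum_const_zero]

lemma Bp_zero_left {r : V → ZMod 2} (h : ∀ v, r v = 0) (s : V → ZMod 2) :
    Bp b r s = 0 := by
  simp [Bp, h]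

lemma Bp_sum_left {ι : Type*} [DecidableEq ι] (T : Finset ι) (r : ι → V → ZMod 2)
    (s : V → ZMod 2) :
    Bp b (fun v => ∑ j ∈ T, r j v) s = ∑ j ∈ T, Bp b (r j) s := by
  induction T using Finset.induction_on with
  | empty => simp [Bp]
  | insert _ _ hx ih =>
      rename_i a T
      rw [Finset.sum_insert hx, ← ih,
        ← Bp_add_left b (r a) (fun v => ∑ j ∈ T, r j v) s]
      apply Bp_congr_left
      intro v
      rw [Finset.sum_insert hx]

end Aux

/-- The combinatorial score function for the distinctness arguments. -/
def fwz (s w : Fin 7) : ZMod 2 := if s = w ∨ s = 0 then 0 else 1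

set_option maxHeartbeats 4000000 in
set_option maxRecDepth 100000 in
lemma key1 : ∀ A C : Finset (Fin 7), A.card = 3 → C.card = 3 → A ≠ C →
    ∃ w : Fin 7, w ≠ 0 ∧
      ((∑ s ∈ A, fwz s w) + ∑ s ∈ C, fwz s w) = 1 := by decide

set_option maxHeartbeats 1000000 in
set_option maxRecDepth 100000 in
lemma key2 : ∀ A : Finset (Fin 7), A.card = 3 →
    ∃ w : Fin 7, w ≠ 0 ∧
      ((∑ s ∈ A, fwz s w) + ∑ s ∈ (Finset.univ : Finset (Fin 7)), fwz s w) = 1 := by decide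

lemma key3 : ∀ n : Fin 7, 1 + ((n.1.choose 2 : ℕ) : ZMod 2) = 0 →
    n.1 = 2 ∨ n.1 = 3 ∨ n.1 = 6 := by decide

/-- Given an Aronhold system `q₁, …, q₇`, the 35 forms `q_{ijk} = q_i + q_j + q_k`
(for distinct `i, j, k`), together with `q_S = q₁ + ⋯ + q₇`, are precisely the 36
even quadratic forms; moreover the `q_{ijk}` are pairwise distinct (for distinct
index triples) and distinct from `q_S`. -/
theorem aronhold_even_forms {V : Type*} [AddCommGroup V] [Module (ZMod 2) V]
    (ω : V →ₗ[ZMod 2] V →ₗ[ZMod 2] ZMod 2)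
    (halt : ∀ v, ω v v = 0)
    (b : Module.Basis (Fin 3 ⊕ Fin 3) (ZMod 2) V)
    (hb : IsSymplecticBasis ω b)
    (q : Fin 7 → V → ZMod 2)
    (hq : IsAronholdSystem ω b q) :
    -- the even quadratic forms are exactly `q_S` and the `q_{ijk}`
    ({f : V → ZMod 2 | IsQuadraticRefinement ω f ∧ arfInvariant b f = 0} =
      {fun v => ∑ k : Fin 7, q k v} ∪
      {f | ∃ i j k : Fin 7, i ≠ j ∧ i ≠ k ∧ j ≠ k ∧
        f = fun v => q i v + q j v + q k v}) ∧
    -- the `q_{ijk}` are pairwise distinct for distinct triples of indices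
    (∀ i j k l m n : Fin 7, i ≠ j → i ≠ k → j ≠ k → l ≠ m → l ≠ n → m ≠ n →
      ({i, j, k} : Finset (Fin 7)) ≠ {l, m, n} →
      (fun v => q i v + q j v + q k v) ≠ (fun v => q l v + q m v + q n v)) ∧
    -- and distinct from `q_S`
    (∀ i j k : Fin 7, i ≠ j → i ≠ k → j ≠ k →
      (fun v => q i v + q j v + q k v) ≠ (fun v => ∑ t : Fin 7, q t v)) := by
    classical
  obtain ⟨hinj, hodd, hazy⟩ := hq
  have href : ∀ k, IsQuadraticRefinement ω (q k) := fun k => (hodd k).1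
  have harf : ∀ k, arfInvariant b (q k) = 1 := fun k => (hodd k).2
  -- the difference functionals
  set ℓ : Fin 7 → V → ZMod 2 := fun s v => q s v + q 0 v with hℓ
  have hℓ0 : ∀ v, ℓ 0 v = 0 := fun v => z2 _
  have hq_eq : ∀ (s : Fin 7) v, q s v = q 0 v + ℓ s v := by
    intro s v
    have : ∀ x a : ZMod 2, x = a + (x + a) := by decide
    exact this (q s v) (q 0 v)
  -- additivity of the differences
  have hℓadd : ∀ (s : Fin 7) v w, ℓ s (v + w) = ℓ s v + ℓ s w := by
    intro s v w
    simp only [hℓ]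
    rw [href s v w, href 0 v w]
    have h5 : ∀ x y c d e : ZMod 2, (x + y + e) + (c + d + e) = (x + c) + (y + d) := by decide
    exact h5 _ _ _ _ _
  -- ℓ s for s ≠ 0 satisfies ψ (ℓ s) = 0
  have hψ : ∀ s : Fin 7, s ≠ 0 →
      arfInvariant b (ℓ s) + Bp b (fun v => q 0 v) (ℓ s) = 0 := by
    intro s hs
    have h1 : arfInvariant b (fun v => q 0 v + ℓ s v) = 1 := by
      rw [arf_congr b (fun v => (hq_eq s v).symm)]
      exact harf s
    rw [arf_add] at h1
    rw [arf_congr b (fun v => rfl : ∀ v, q 0 v = (fun v => q 0 v) v)] at *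
    have h0 : arfInvariant b (fun v => q 0 v) = 1 := by
      rw [arf_congr b (fun v => rfl : ∀ v, (fun v => q 0 v) v = q 0 v)]
      exact harf 0
    rw [h0] at h1
    have : ∀ x y : ZMod 2, 1 + x + y = 1 → x + y = 0 := by decide
    exact this _ _ h1
  -- the pairing values
  have hBll : ∀ s t : Fin 7, s ≠ 0 → t ≠ 0 → s ≠ t → Bp b (ℓ s) (ℓ t) = 1 := by
    intro s t hs ht hst
    have h1 : arfInvariant b (fun v => q 0 v + q s v + q t v) = 0 :=
      hazy 0 s t (Ne.symm hs) (Ne.symm ht) hst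
    have h2 : arfInvariant b (fun v => q s v + ℓ t v) = 0 := by
      rw [← h1]
      apply arf_congr
      intro v
      simp only [hℓ]
      have : ∀ x a y : ZMod 2, x + (y + a) = a + x + y := by decide
      exact this (q s v) (q 0 v) (q t v)
    rw [arf_add] at h2
    rw [harf s] at h2
    -- Bp b (q s) (ℓ t) = Bp b (q 0) (ℓ t) + Bp b (ℓ s) (ℓ t)
    have h3 : Bp b (q s) (ℓ t) = Bp b (fun v => q 0 v) (ℓ t) + Bp b (ℓ s) (ℓ t) := by
      rw [← Bp_add_left]
      apply Bp_congr_left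
      intro v
      exact hq_eq s v
    rw [h3] at h2
    have h4 := hψ t ht
    have : ∀ x y z : ZMod 2, 1 + x + (y + z) = 0 → x + y = 0 → z = 1 := by decide
    exact this _ _ _ h2 h4
  have hBℓself : ∀ s : Fin 7, Bp b (ℓ s) (ℓ s) = 0 := fun s => Bp_self b (ℓ s)
  have hBℓzero : ∀ s : V → ZMod 2, Bp b (ℓ 0) s = 0 := fun s => Bp_zero_left b hℓ0 s
  have hBfwz : ∀ s w : Fin 7, w ≠ 0 → Bp b (ℓ s) (ℓ w) = fwz s w := by
    intro s w hw
    by_cases hs0 : s = 0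
    · subst hs0
      rw [hBℓzero]
      simp [fwz]
    · by_cases hsw : s = w
      · subst hsw
        rw [hBℓself]
        simp [fwz]
      · rw [hBll s w hs0 hw hsw]
        simp [fwz, hsw, hs0]
  -- sum over a finset of the q's
  have hsum_rep : ∀ (A : Finset (Fin 7)) v,
      ∑ s ∈ A, ℓ s v = (∑ s ∈ A, q s v) + (A.card : ZMod 2) * q 0 v := by
    intro A v
    simp only [hℓ]
    rw [Finset.sum_add_distrib, Finset.sum_const, nsmul_eq_mul]
  -- Part 2: distinctness of the q_{ijk}
  have part2 : ∀ i j k l m n : Fin 7, i ≠ j → i ≠ k → j ≠ k → l ≠ m → l ≠ n → m ≠ n →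
      ({i, j, k} : Finset (Fin 7)) ≠ {l, m, n} →
      (fun v => q i v + q j v + q k v) ≠ (fun v => q l v + q m v + q n v) := by
    intro i j k l m n hij hik hjk hlm hln hmn hne hEq
    have hA : ({i, j, k} : Finset (Fin 7)).card = 3 :=
      Finset.card_eq_three.mpr ⟨i, j, k, hij, hik, hjk, rfl⟩
    have hC : ({l, m, n} : Finset (Fin 7)).card = 3 :=
      Finset.card_eq_three.mpr ⟨l, m, n, hlm, hln, hmn, rfl⟩
    obtain ⟨w, hw0, hwsum⟩ := key1 _ _ hA hC hne
    have h3 : ((3 : ℕ) : ZMod 2) = 1 := by decide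
    have hG0 : ∀ v, (∑ s ∈ ({i, j, k} : Finset (Fin 7)), ℓ s v)
        + (∑ s ∈ ({l, m, n} : Finset (Fin 7)), ℓ s v) = 0 := by
      intro v
      rw [hsum_rep, hsum_rep, hA, hC, h3]
      have hsA : ∑ s ∈ ({i, j, k} : Finset (Fin 7)), q s v = q i v + (q j v + q k v) := by
        rw [Finset.sum_insert (by simp [hij, hik]), Finset.sum_insert (by simp [hjk]),
          Finset.sum_singleton]
      have hsC : ∑ s ∈ ({l, m, n} : Finset (Fin 7)), q s v = q l v + (q m v + q n v) := by
        rw [Finset.sum_insert (by simp [hlm, hln]), Finset.sum_insert (by simp [hmn]),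
          Finset.sum_singleton]
      rw [hsA, hsC]
      have hv := congrFun hEq v
      have hh : ∀ x1 x2 x3 y1 y2 y3 c : ZMod 2, x1 + x2 + x3 = y1 + y2 + y3 →
          (x1 + (x2 + x3) + c) + (y1 + (y2 + y3) + c) = 0 := by decide
      exact hh _ _ _ _ _ _ _ hv
    have hpair : Bp b (fun v => (∑ s ∈ ({i, j, k} : Finset (Fin 7)), ℓ s v)
        + (∑ s ∈ ({l, m, n} : Finset (Fin 7)), ℓ s v)) (ℓ w) = 0 := Bp_zero_left b hG0 _
    have hadd := Bp_add_left b (fun v => ∑ s ∈ ({i, j, k} : Finset (Fin 7)), ℓ s v)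
      (fun v => ∑ s ∈ ({l, m, n} : Finset (Fin 7)), ℓ s v) (ℓ w)
    rw [hadd, Bp_sum_left, Bp_sum_left] at hpair
    simp only [fun s => hBfwz s w hw0] at hpair
    rw [hwsum] at hpair
    exact (by decide : (1 : ZMod 2) ≠ 0) hpair
  -- Part 3: distinctness from q_S
  have part3 : ∀ i j k : Fin 7, i ≠ j → i ≠ k → j ≠ k →
      (fun v => q i v + q j v + q k v) ≠ (fun v => ∑ t : Fin 7, q t v) := by
    intro i j k hij hik hjk hEq
    have hA : ({i, j, k} : Finset (Fin 7)).card = 3 :=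
      Finset.card_eq_three.mpr ⟨i, j, k, hij, hik, hjk, rfl⟩
    obtain ⟨w, hw0, hwsum⟩ := key2 _ hA
    have h3 : ((3 : ℕ) : ZMod 2) = 1 := by decide
    have h7 : (((Finset.univ : Finset (Fin 7)).card : ℕ) : ZMod 2) = 1 := by decide
    have hG0 : ∀ v, (∑ s ∈ ({i, j, k} : Finset (Fin 7)), ℓ s v)
        + (∑ s ∈ (Finset.univ : Finset (Fin 7)), ℓ s v) = 0 := by
      intro v
      rw [hsum_rep, hsum_rep, hA, h3, h7]
      have hsA : ∑ s ∈ ({i, j, k} : Finset (Fin 7)), q s v = q i v + (q j v + q k v) := by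
        rw [Finset.sum_insert (by simp [hij, hik]), Finset.sum_insert (by simp [hjk]),
          Finset.sum_singleton]
      rw [hsA]
      have hv := congrFun hEq v
      have hh : ∀ x1 x2 x3 Y c : ZMod 2, x1 + x2 + x3 = Y →
          (x1 + (x2 + x3) + c) + (Y + c) = 0 := by decide
      exact hh _ _ _ _ _ hv
    have hpair : Bp b (fun v => (∑ s ∈ ({i, j, k} : Finset (Fin 7)), ℓ s v)
        + (∑ s ∈ (Finset.univ : Finset (Fin 7)), ℓ s v)) (ℓ w) = 0 := Bp_zero_left b hG0 _
    have hadd := Bp_add_left b (fun v => ∑ s ∈ ({i, j, k} : Finset (Fin 7)), ℓ s v)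
      (fun v => ∑ s ∈ (Finset.univ : Finset (Fin 7)), ℓ s v) (ℓ w)
    rw [hadd, Bp_sum_left, Bp_sum_left] at hpair
    simp only [fun s => hBfwz s w hw0] at hpair
    rw [hwsum] at hpair
    exact (by decide : (1 : ZMod 2) ≠ 0) hpair

  -- ### Part 1 machinery
  have h01 : ∀ c : ZMod 2, c = 0 ∨ c = 1 := by decide
  have harfT : ∀ T : Finset (Fin 6),
      arfInvariant b (fun v => q 0 v + ∑ t ∈ T, ℓ t.succ v)
        = 1 + ((T.card.choose 2 : ℕ) : ZMod 2) := by
    intro T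
    induction T using Finset.induction_on with
    | empty =>
        have e : arfInvariant b (fun v => q 0 v + ∑ t ∈ (∅ : Finset (Fin 6)), ℓ t.succ v)
            = arfInvariant b (q 0) :=
          arf_congr b (r := fun v => q 0 v + ∑ t ∈ (∅ : Finset (Fin 6)), ℓ t.succ v)
            (s := q 0) (fun v => by
              show q 0 v + ∑ t ∈ (∅ : Finset (Fin 6)), ℓ t.succ v = q 0 v
              rw [Finset.sum_empty, add_zero])
        rw [e, harf 0]
        norm_num
    | insert _ _ hx ih =>
        rename_i a T
        have e1 : arfInvariant b (fun v => q 0 v + ∑ t ∈ insert a T, ℓ t.succ v)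
            = arfInvariant b (fun v => (q 0 v + ∑ t ∈ T, ℓ t.succ v) + ℓ a.succ v) :=
          arf_congr b (r := fun v => q 0 v + ∑ t ∈ insert a T, ℓ t.succ v)
            (s := fun v => (q 0 v + ∑ t ∈ T, ℓ t.succ v) + ℓ a.succ v)
            (fun v => by
              show q 0 v + ∑ t ∈ insert a T, ℓ t.succ v
                = (q 0 v + ∑ t ∈ T, ℓ t.succ v) + ℓ a.succ v
              rw [Finset.sum_insert hx]; ring)
        rw [e1]
        have e2 := arf_add b (fun v => q 0 v + ∑ t ∈ T, ℓ t.succ v) (ℓ a.succ)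
        rw [e2, ih]
        have e3 := Bp_add_left b (fun v => q 0 v) (fun v => ∑ t ∈ T, ℓ t.succ v) (ℓ a.succ)
        rw [e3, Bp_sum_left]
        have e4 : ∑ t ∈ T, Bp b (ℓ t.succ) (ℓ a.succ) = (T.card : ZMod 2) := by
          rw [Finset.sum_congr rfl (fun t ht =>
            hBll t.succ a.succ (Fin.succ_ne_zero t) (Fin.succ_ne_zero a)
              (fun e => hx ((Fin.succ_injective _ e) ▸ ht)))]
          rw [Finset.sum_const, nsmul_eq_mul, mul_one]
        rw [e4, Finset.card_insert_of_notMem hx]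
        have e5 : (((T.card + 1).choose 2 : ℕ) : ZMod 2)
            = ((T.card.choose 2 : ℕ) : ZMod 2) + (T.card : ZMod 2) := by
          have : (T.card + 1).choose 2 = T.card.choose 2 + T.card := by
            rw [Nat.choose_succ_succ, Nat.choose_one_right, Nat.add_comm]
          rw [this]
          push_cast
          ring
        rw [e5]
        have hψa := hψ a.succ (Fin.succ_ne_zero a)
        have hh : ∀ c x y d : ZMod 2, x + y = 0 → 1 + c + x + (y + d) = 1 + (c + d) := by decide
        exact hh _ _ _ _ hψa
  have hqS_rep : ∀ v, (∑ k : Fin 7, q k v)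
      = q 0 v + ∑ t ∈ (Finset.univ : Finset (Fin 6)), ℓ t.succ v := by
    intro v
    rw [Fin.sum_univ_succ]
    congr 1
    rw [Finset.sum_congr rfl (fun t _ => hq_eq t.succ v), Finset.sum_add_distrib,
      Finset.sum_const, Finset.card_univ]
    have h6 : ((Fintype.card (Fin 6) : ℕ) : ZMod 2) = 0 := by decide
    rw [nsmul_eq_mul, h6, zero_mul, zero_add]
  have harfS : arfInvariant b (fun v => ∑ k : Fin 7, q k v) = 0 := by
    have e : arfInvariant b (fun v => ∑ k : Fin 7, q k v)
        = arfInvariant b (fun v => q 0 v + ∑ t ∈ (Finset.univ : Finset (Fin 6)), ℓ t.succ v) :=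
      arf_congr b (r := fun v => ∑ k : Fin 7, q k v)
        (s := fun v => q 0 v + ∑ t ∈ (Finset.univ : Finset (Fin 6)), ℓ t.succ v) hqS_rep
    rw [e, harfT]
    decide
  have hqS_refine : IsQuadraticRefinement ω (fun v => ∑ k : Fin 7, q k v) := by
    intro v w
    simp only
    rw [Finset.sum_congr rfl (fun k _ => href k v w), Finset.sum_add_distrib,
      Finset.sum_add_distrib, Finset.sum_const, Finset.card_univ]
    congr 1
    have h7 : ((Fintype.card (Fin 7) : ℕ) : ZMod 2) = 1 := by decide
    rw [nsmul_eq_mul, h7, one_mul]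
  have htrip_refine : ∀ i j k : Fin 7,
      IsQuadraticRefinement ω (fun v => q i v + q j v + q k v) := by
    intro i j k v w
    simp only
    rw [href i v w, href j v w, href k v w]
    have hh : ∀ x1 x2 y1 y2 z1 z2 e : ZMod 2,
        (x1 + x2 + e) + (y1 + y2 + e) + (z1 + z2 + e)
          = (x1 + y1 + z1) + (x2 + y2 + z2) + e := by decide
    exact hh _ _ _ _ _ _ _
  -- dual vector construction
  have mk_dual : ∀ (m : V → ZMod 2), (∀ v w, m (v + w) = m v + m w) →
      ∃ M : Module.Dual (ZMod 2) V, ∀ v, M v = m v := by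
    intro m hm
    have hm0 : m 0 = 0 := by
      have h := hm 0 0
      rw [add_zero] at h
      have h2 : m 0 + 0 = m 0 + m 0 := by rw [add_zero]; exact h
      exact (add_left_cancel h2).symm
    refine ⟨{ toFun := m, map_add' := hm, map_smul' := ?_ }, fun v => rfl⟩
    intro c v
    rcases h01 c with rfl | rfl
    · simp [hm0]
    · simp
  have hLmex : ∀ t : Fin 6, ∃ M : Module.Dual (ZMod 2) V, ∀ v, M v = ℓ t.succ v :=
    fun t => mk_dual _ (hℓadd t.succ)
  choose Lm hLm using hLmex
  -- linear independence of the six difference functionals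
  have li : LinearIndependent (ZMod 2) Lm := by
    rw [Fintype.linearIndependent_iff]
    intro g hg
    have hPsum : ∀ k : Fin 6, ∑ t : Fin 6, g t * Bp b (ℓ t.succ) (ℓ k.succ) = 0 := by
      intro k
      have hz : ∀ v, (∑ t : Fin 6, g t * ℓ t.succ v) = 0 := by
        intro v
        have h2 : (∑ t : Fin 6, g t • Lm t) v = ∑ t : Fin 6, g t * ℓ t.succ v := by
          rw [LinearMap.sum_apply]
          exact Finset.sum_congr rfl (fun t _ => by
            rw [LinearMap.smul_apply, smul_eq_mul, hLm])
        rw [← h2, hg, LinearMap.zero_apply]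
      have h1 : Bp b (fun v => ∑ t : Fin 6, g t * ℓ t.succ v) (ℓ k.succ) = 0 :=
        Bp_zero_left b hz _
      have h3 := Bp_sum_left b Finset.univ (fun t v => g t * ℓ t.succ v) (ℓ k.succ)
      rw [h3] at h1
      rw [Finset.sum_congr rfl
        (fun t _ => Bp_smul_left b (g t) (ℓ t.succ) (ℓ k.succ))] at h1
      exact h1
    have hval : ∀ k : Fin 6, (∑ t : Fin 6, g t) + g k = 0 := by
      intro k
      have h := hPsum k
      have e : ∀ t : Fin 6, g t * Bp b (ℓ t.succ) (ℓ k.succ)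
          = g t + (if t = k then g t else 0) := by
        intro t
        by_cases htk : t = k
        · subst htk
          rw [Bp_self, mul_zero, if_pos rfl]
          exact (z2 _).symm
        · rw [hBll t.succ k.succ (Fin.succ_ne_zero t) (Fin.succ_ne_zero k)
            (fun e => htk (Fin.succ_injective _ e)), mul_one, if_neg htk, add_zero]
      rw [Finset.sum_congr rfl (fun t _ => e t), Finset.sum_add_distrib,
        Finset.sum_ite_eq' Finset.univ k g, if_pos (Finset.mem_univ k)] at h
      exact h
    intro t
    have hconst : ∀ k, g k = ∑ t : Fin 6, g t := by
      intro k
      have hh : ∀ a x : ZMod 2, a + x = 0 → x = a := by decide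
      exact hh _ _ (hval k)
    have hs : (∑ t : Fin 6, g t) = 0 := by
      have h := Finset.sum_congr rfl (fun k (_ : k ∈ (Finset.univ : Finset (Fin 6))) => hconst k)
      rw [Finset.sum_const, Finset.card_univ] at h
      rw [nsmul_eq_mul] at h
      have h6 : ((Fintype.card (Fin 6) : ℕ) : ZMod 2) = 0 := by decide
      rw [h6, zero_mul] at h
      exact h
    rw [hconst t, hs]
  haveI : Fact (Nat.Prime 2) := ⟨Nat.prime_two⟩
  have hcard : Fintype.card (Fin 6) = Module.finrank (ZMod 2) (Module.Dual (ZMod 2) V) := by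
    rw [Module.finrank_eq_card_basis b.dualBasis]
    simp
  refine ⟨?_, part2, part3⟩
  ext f
  simp only [Set.mem_setOf_eq, Set.mem_union, Set.mem_singleton_iff]
  constructor
  · rintro ⟨hfref, hfarf⟩
    set m : V → ZMod 2 := fun v => f v + q 0 v with hmdef
    have hmadd : ∀ v w, m (v + w) = m v + m w := by
      intro v w
      simp only [hmdef]
      rw [hfref v w, href 0 v w]
      have hh : ∀ x y c d e : ZMod 2, (x + y + e) + (c + d + e) = (x + c) + (y + d) := by grind
      exact hh _ _ _ _ _
    obtain ⟨M, hM⟩ := mk_dual m hmadd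
    set Bs := basisOfLinearIndependentOfCardEqFinrank li hcard with hBsdef
    have hrep := Bs.sum_repr M
    set c : Fin 6 → ZMod 2 := fun t => Bs.repr M t with hcdef
    have hBs : ∀ t, Bs t = Lm t := fun t => by
      rw [hBsdef, coe_basisOfLinearIndependentOfCardEqFinrank]
    have hmv : ∀ v, m v = ∑ t : Fin 6, c t * ℓ t.succ v := by
      intro v
      have h2 := congrArg (fun (N : Module.Dual (ZMod 2) V) => N v) hrep
      rw [← hM v, ← h2, LinearMap.sum_apply]
      exact Finset.sum_congr rfl (fun t _ => by
        rw [LinearMap.smul_apply, smul_eq_mul, hBs, hLm])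
    set T : Finset (Fin 6) := Finset.univ.filter (fun t => c t = 1) with hTdef
    have hmT : ∀ v, m v = ∑ t ∈ T, ℓ t.succ v := by
      intro v
      rw [hmv v, hTdef, Finset.sum_filter]
      exact Finset.sum_congr rfl (fun t _ => by
        rcases h01 (c t) with h | h <;> simp [h])
    have hfT : ∀ v, f v = q 0 v + ∑ t ∈ T, ℓ t.succ v := by
      intro v
      rw [← hmT v]
      simp only [hmdef]
      have hh : ∀ x a : ZMod 2, x = a + (x + a) := by grind
      exact hh _ _
    have harff : 1 + ((T.card.choose 2 : ℕ) : ZMod 2) = 0 := by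
      have e : arfInvariant b f
          = arfInvariant b (fun v => q 0 v + ∑ t ∈ T, ℓ t.succ v) :=
        arf_congr b (r := f) (s := fun v => q 0 v + ∑ t ∈ T, ℓ t.succ v) hfT
      rw [← harfT T, ← e, hfarf]
    have hch : T.card = 2 ∨ T.card = 3 ∨ T.card = 6 := by
      have hle : T.card ≤ 6 := by
        calc T.card ≤ (Finset.univ : Finset (Fin 6)).card := Finset.card_le_univ T
          _ = 6 := by simp
      exact key3 ⟨T.card, by omega⟩ harff
    rcases hch with h2 | h3 | h6
    · obtain ⟨s, t, hst, hTst⟩ := Finset.card_eq_two.mp h2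
      right
      refine ⟨0, s.succ, t.succ, (Fin.succ_ne_zero s).symm, (Fin.succ_ne_zero t).symm,
        fun e => hst (Fin.succ_injective _ e), ?_⟩
      funext v
      rw [hfT v, hTst, Finset.sum_pair hst]
      simp only [hℓ]
      have hh : ∀ a x y : ZMod 2, a + (x + a + (y + a)) = a + x + y := by grind
      exact hh _ _ _
    · obtain ⟨x, y, z, hxy, hxz, hyz, hTxyz⟩ := Finset.card_eq_three.mp h3
      right
      refine ⟨x.succ, y.succ, z.succ,
        fun e => hxy (Fin.succ_injective _ e),
        fun e => hxz (Fin.succ_injective _ e),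
        fun e => hyz (Fin.succ_injective _ e), ?_⟩
      funext v
      rw [hfT v, hTxyz,
        Finset.sum_insert (by simp [hxy, hxz]),
        Finset.sum_insert (by simp [hyz]),
        Finset.sum_singleton]
      simp only [hℓ]
      have hh : ∀ a x y z : ZMod 2, a + (x + a + (y + a + (z + a))) = x + y + z := by grind
      exact hh _ _ _ _
    · left
      have hTuniv : T = Finset.univ :=
        Finset.eq_univ_of_card T (by simp [h6])
      funext v
      rw [hqS_rep v, ← hTuniv]
      exact hfT v
  · rintro (rfl | ⟨i, j, k, hij, hik, hjk, rfl⟩)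
    · exact ⟨hqS_refine, harfS⟩
    · exact ⟨htrip_refine i j k, hazy i j k hij hik hjk⟩
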